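/- Fix n ≥ 1, δ ∈ (0,1), ε ∈ (0,1], and a probability distribution ν on {0,1}^n satisfying D(ν‖U) ≤ ln(3/δ) (as holds with probability at least 1−δ for the output distribution of a random circuit drawn from a 2^{−2n−1}-approximate 2-design). Define the mirror descent iterates μ_0 = U and, for 1 ≤ s ≤ t, μ_s(x) = exp(−(ε/4)·Σ_{i=1}^{s} f_i(x)) / Z_s with Z_s = Σ_{x∈{0,1}^n} exp(−(ε/4)·Σ_{i=1}^{s} f_i(x)), where f_1,…,f_t : {0,1}^n → [0,1] satisfy E_{μ_{i−1}}[f_i] − E_ν[f_i] ≥ ε for every 1 ≤ i ≤ t. Then: (i) t ≤ 16·ε^{−2}·ln(3/δ); (ii) ‖ν − μ_t‖_TV ≤ √(2·(ln(3/δ) − t·ε²/16)); and (iii) the rejection-sampling constant satisfies 2^n / Z_t ≤ exp(4·ln(3/δ)/ε), so the expected number of rejection-sampling trials needed to sample from μ_t is at most exp(4·ln(3/δ)/ε). -/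

import Mathlib

open Finset

noncomputable section

/-- Expectation of `f` under a distribution `μ` on a finite type. -/
def expect {S : Type*} [Fintype S] (μ f : S → ℝ) : ℝ := ∑ x, μ x * f x

/-- Relative entropy (KL divergence, natural logarithm). -/
def klDiv {S : Type*} [Fintype S] (ν μ : S → ℝ) : ℝ := ∑ x, ν x * Real.log (ν x / μ x)

/-- Total variation distance. -/
def tvDist {S : Type*} [Fintype S] (μ ν : S → ℝ) : ℝ := (1 / 2) * ∑ x, |μ x - ν x|

/-- `μ` is a probability distribution on the finite type `S`. -/
def IsProbDist {S : Type*} [Fintype S] (μ : S → ℝ) : Prop :=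
  (∀ x, 0 ≤ μ x) ∧ ∑ x, μ x = 1

/-- The uniform distribution on `{0,1}^n`. -/
def uniformBn (n : ℕ) : (Fin n → Bool) → ℝ := fun _ => ((2 : ℝ) ^ n)⁻¹

/-- The `s`-th mirror descent iterate: the Gibbs distribution
`μ_s(x) = exp(-(ε/4)·∑_{i<s} f_i(x)) / Z_s`.  For `s = 0` this is the uniform
distribution on `{0,1}^n`. -/
def mdIter (n : ℕ) (ε : ℝ) (f : ℕ → (Fin n → Bool) → ℝ) (s : ℕ) :
    (Fin n → Bool) → ℝ :=
  fun x => Real.exp (-(ε / 4) * ∑ i ∈ Finset.range s, f i x) /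
    ∑ y, Real.exp (-(ε / 4) * ∑ i ∈ Finset.range s, f i y)


lemma expNegLe {a : ℝ} (ha : 0 ≤ a) : Real.exp (-a) ≤ 1 - a + a ^ 2 / 2 := by
  have mono : MonotoneOn (fun x : ℝ => 1 - x + x ^ 2 / 2 - Real.exp (-x)) (Set.Ici 0) := by
    apply monotoneOn_of_deriv_nonneg (convex_Ici 0)
    · fun_prop
    · intro x hx
      rw [interior_Ici] at hx
      exact DifferentiableAt.differentiableWithinAt (by fun_prop)
    · intro x hx
      rw [interior_Ici, Set.mem_Ioi] at hx
      have hd : HasDerivAt (fun x : ℝ => 1 - x + x ^ 2 / 2 - Real.exp (-x))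
          (-1 + x + Real.exp (-x)) x := by
        have h1 : HasDerivAt (fun x : ℝ => 1 - x + x ^ 2 / 2) (-1 + x) x := by
          simpa [Pi.add_def, Pi.sub_def, Function.comp_def] using (((hasDerivAt_id x).const_sub 1).add
            (((hasDerivAt_id x).pow 2).div_const 2))
        have h2 : HasDerivAt (fun x : ℝ => Real.exp (-x)) (-Real.exp (-x)) x := by
          simpa [Function.comp_def] using (Real.hasDerivAt_exp (-x)).comp x ((hasDerivAt_id x).neg)
        simpa [Pi.sub_def] using h1.sub h2
      rw [hd.deriv]
      nlinarith [Real.add_one_le_exp (-x)]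
  have h0 := mono (Set.self_mem_Ici) (Set.mem_Ici.2 ha) ha
  simp only [neg_zero, Real.exp_zero] at h0
  nlinarith [h0]

lemma sinhLeMulCosh {x : ℝ} (hx : 0 ≤ x) : Real.sinh x ≤ x * Real.cosh x := by
  have mono : MonotoneOn (fun x : ℝ => x * Real.cosh x - Real.sinh x) (Set.Ici 0) := by
    apply monotoneOn_of_deriv_nonneg (convex_Ici 0)
    · fun_prop
    · intro x hx
      rw [interior_Ici] at hx
      exact DifferentiableAt.differentiableWithinAt (by fun_prop)
    · intro x hx
      rw [interior_Ici, Set.mem_Ioi] at hx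
      have hd : HasDerivAt (fun x : ℝ => x * Real.cosh x - Real.sinh x)
          (x * Real.sinh x) x := by
        have h1 : HasDerivAt (fun x : ℝ => x * Real.cosh x)
            (1 * Real.cosh x + x * Real.sinh x) x :=
          (hasDerivAt_id x).mul (Real.hasDerivAt_cosh x)
        have := h1.sub (Real.hasDerivAt_sinh x)
        simpa [Pi.sub_def] using this
      rw [hd.deriv]
      exact mul_nonneg hx.le (Real.sinh_nonneg_iff.2 hx.le)
  have h0 := mono (Set.self_mem_Ici) (Set.mem_Ici.2 hx) hx
  simp only [Real.cosh_zero, Real.sinh_zero, mul_zero, zero_mul, sub_zero] at h0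
  linarith [h0]

lemma logLbGeOne {z : ℝ} (hz : 1 ≤ z) : 2 * (z - 1) / (z + 1) ≤ Real.log z := by
  have hz0 : (0:ℝ) < z := lt_of_lt_of_le one_pos hz
  set s : ℝ := Real.log z / 2 with hs
  have hs0 : 0 ≤ s := by rw [hs]; have := Real.log_nonneg hz; linarith
  have hzx : z = Real.exp s * Real.exp s := by
    rw [← Real.exp_add]
    rw [hs]; rw [show Real.log z / 2 + Real.log z / 2 = Real.log z by ring, Real.exp_log hz0]
  have key := sinhLeMulCosh hs0
  rw [Real.sinh_eq, Real.cosh_eq] at key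
  have hu : 0 < Real.exp s := Real.exp_pos s
  have hui : Real.exp (-s) = (Real.exp s)⁻¹ := Real.exp_neg s
  rw [hui] at key
  rw [hzx]
  rw [div_le_iff₀ (by positivity)]
  have h2 : Real.log (Real.exp s * Real.exp s) = 2 * s := by
    rw [← Real.exp_add, Real.log_exp]; ring
  rw [h2]
  have := key
  rw [div_le_iff₀ (by norm_num)] at this
  have hc : Real.exp s * (Real.exp s)⁻¹ = 1 := mul_inv_cancel₀ hu.ne'
  nlinarith [mul_le_mul_of_nonneg_right this hu.le, hc, hu, hs0]

lemma logLbLeOne {z : ℝ} (h0 : 0 < z) (h1 : z ≤ 1) : (z ^ 2 - 1) / (2 * z) ≤ Real.log z := by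
  have h : -Real.log z ≤ Real.sinh (Real.log z⁻¹) := by
    rw [← Real.log_inv]
    exact Real.self_le_sinh_iff.2 (Real.log_nonneg (by
      rw [le_inv_comm₀ one_pos h0]; simpa using h1))
  rw [Real.sinh_log (by positivity)] at h
  have hzi : (z⁻¹)⁻¹ = z := inv_inv z
  rw [hzi] at h
  rw [div_le_iff₀ (by positivity)]
  nlinarith [mul_le_mul_of_nonneg_right h h0.le, mul_inv_cancel₀ h0.ne', h0]

lemma pointwiseKL {a b : ℝ} (ha : 0 ≤ a) (hb : 0 < b) :
    (a - b) ^ 2 / (a + b) ≤ 2 * (a * Real.log (a / b) - a + b) := by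
  rcases eq_or_lt_of_le ha with h | h
  · simp only [← h]
    rw [div_le_iff₀ (by linarith)]
    nlinarith
  · rcases le_or_gt b a with hab | hab
    · have hz : 1 ≤ a / b := (one_le_div hb).2 hab
      have hlog := logLbGeOne hz
      have hab1 : 2 * (a/b - 1)/(a/b + 1) = 2 * (a - b)/(a + b) := by
        rw [div_eq_div_iff (by positivity) (by positivity)]
        field_simp
        try ring
      rw [hab1] at hlog
      have key : (a - b) ^ 2 / (a + b) ≤ a * Real.log (a / b) - a + b := by
        have h2 : a * (2 * (a - b)/(a+b)) ≤ a * Real.log (a/b) :=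
          mul_le_mul_of_nonneg_left hlog ha
        have h3 : (a - b) ^ 2 / (a + b) = a * (2 * (a - b)/(a+b)) - (a - b) := by
          field_simp
          try ring
        linarith
      have hnn : 0 ≤ a * Real.log (a / b) - a + b := by
        have := div_nonneg (sq_nonneg (a - b)) (by linarith : (0:ℝ) ≤ a + b)
        linarith
      linarith
    · have hz0 : 0 < a / b := by positivity
      have hz1 : a / b ≤ 1 := by rw [div_le_one hb]; linarith
      have hlog := logLbLeOne hz0 hz1
      have h2 : a * ((a/b)^2 - 1)/(2 * (a/b)) ≤ a * Real.log (a/b) := by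
        rw [mul_div_assoc]
        exact mul_le_mul_of_nonneg_left hlog ha
      have h3 : a * ((a/b)^2 - 1)/(2 * (a/b)) = (a^2 - b^2)/(2*b) := by
        field_simp
        try ring
      rw [h3] at h2
      have key : (a - b) ^ 2 / (2 * b) ≤ a * Real.log (a / b) - a + b := by
        have : (a^2 - b^2)/(2*b) - a + b = (a - b)^2/(2*b) := by
          field_simp; try ring
        linarith
      have hmono : (a - b)^2/(a + b) ≤ (a - b)^2/b := by
        apply div_le_div_of_nonneg_left (sq_nonneg _) hb (by linarith)
      have : (a-b)^2 / b = 2 * ((a-b)^2/(2*b)) := by field_simp; try ring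
      linarith


lemma klDivNonneg {S : Type*} [Fintype S] {ν μ : S → ℝ} (hν : IsProbDist ν)
    (hμ : IsProbDist μ) (hpos : ∀ x, 0 < μ x) : 0 ≤ klDiv ν μ := by
  have key : ∀ x, ν x - μ x ≤ ν x * Real.log (ν x / μ x) := by
    intro x
    rcases eq_or_lt_of_le (hν.1 x) with h | h
    · rw [← h]; simpa using (hpos x).le
    · have hlog : 1 - (ν x / μ x)⁻¹ ≤ Real.log (ν x / μ x) :=
        Real.one_sub_inv_le_log_of_pos (div_pos h (hpos x))
      have h2 := mul_le_mul_of_nonneg_left hlog h.le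
      have h3 : (ν x / μ x)⁻¹ = μ x / ν x := by rw [inv_div]
      rw [h3] at h2
      have h4 : ν x * (1 - μ x / ν x) = ν x - μ x := by field_simp
      linarith [h4 ▸ h2]
  have h0 : (0:ℝ) = ∑ x, (ν x - μ x) := by
    rw [Finset.sum_sub_distrib, hν.2, hμ.2, sub_self]
  rw [klDiv, h0]
  exact Finset.sum_le_sum fun x _ => key x

lemma tvSqLeKl {S : Type*} [Fintype S] {ν μ : S → ℝ} (hν : IsProbDist ν)
    (hμ : IsProbDist μ) (hpos : ∀ x, 0 < μ x) : tvDist ν μ ^ 2 ≤ klDiv ν μ := by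
  have hg : ∀ x ∈ Finset.univ (α := S), 0 < ν x + μ x := fun x _ => by
    have := hν.1 x; have := hpos x; linarith
  have hCS := Finset.sq_sum_div_le_sum_sq_div Finset.univ
    (fun x => |ν x - μ x|) (g := fun x => ν x + μ x) hg
  have hsum2 : ∑ x, (ν x + μ x) = 2 := by
    rw [Finset.sum_add_distrib, hν.2, hμ.2]; norm_num
  have hP : ∑ x, |ν x - μ x| ^ 2 / (ν x + μ x) ≤ 2 * klDiv ν μ := by
    have hterm : ∀ x ∈ Finset.univ (α := S), |ν x - μ x| ^ 2 / (ν x + μ x) ≤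
        2 * (ν x * Real.log (ν x / μ x) - ν x + μ x) := by
      intro x _
      rw [sq_abs]
      exact pointwiseKL (hν.1 x) (hpos x)
    calc ∑ x, |ν x - μ x| ^ 2 / (ν x + μ x)
        ≤ ∑ x, 2 * (ν x * Real.log (ν x / μ x) - ν x + μ x) := Finset.sum_le_sum hterm
      _ = 2 * klDiv ν μ := by
          rw [← Finset.mul_sum, klDiv]
          congr 1
          rw [show ∀ g h k : S → ℝ, (∑ x, (g x - h x + k x)) = (∑ x, g x) - (∑ x, h x) + (∑ x, k x) from
            fun g h k => by rw [Finset.sum_add_distrib, Finset.sum_sub_distrib]]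
          rw [hν.2, hμ.2]; ring
  rw [hsum2] at hCS
  have htv : tvDist ν μ = (1/2) * ∑ x, |ν x - μ x| := rfl
  rw [htv]
  have habs : (0:ℝ) ≤ ∑ x, |ν x - μ x| := Finset.sum_nonneg fun x _ => abs_nonneg _
  nlinarith [hCS, hP]


def Zf (n : ℕ) (ε : ℝ) (f : ℕ → (Fin n → Bool) → ℝ) (s : ℕ) : ℝ :=
  ∑ y, Real.exp (-(ε / 4) * ∑ i ∈ Finset.range s, f i y)

lemma Zf_pos (n : ℕ) (ε : ℝ) (f : ℕ → (Fin n → Bool) → ℝ) (s : ℕ) :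
    0 < Zf n ε f s :=
  Finset.sum_pos (fun y _ => Real.exp_pos _) Finset.univ_nonempty

lemma mdIter_pos (n : ℕ) (ε : ℝ) (f : ℕ → (Fin n → Bool) → ℝ) (s : ℕ)
    (x : Fin n → Bool) : 0 < mdIter n ε f s x :=
  div_pos (Real.exp_pos _) (Zf_pos n ε f s)

lemma mdIter_prob (n : ℕ) (ε : ℝ) (f : ℕ → (Fin n → Bool) → ℝ) (s : ℕ) :
    IsProbDist (mdIter n ε f s) := by
  refine ⟨fun x => (mdIter_pos n ε f s x).le, ?_⟩
  show (∑ x, Real.exp (-(ε / 4) * ∑ i ∈ Finset.range s, f i x) / Zf n ε f s) = 1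
  rw [← Finset.sum_div]
  exact div_self (Zf_pos n ε f s).ne'

lemma card_bn (n : ℕ) : (Fintype.card (Fin n → Bool) : ℝ) = 2 ^ n := by
  simp

lemma Zf_zero (n : ℕ) (ε : ℝ) (f : ℕ → (Fin n → Bool) → ℝ) :
    Zf n ε f 0 = 2 ^ n := by
  simp only [Zf, Finset.range_zero, Finset.sum_empty, mul_zero, Real.exp_zero]
  rw [Finset.sum_const, Finset.card_univ, nsmul_eq_mul, mul_one, card_bn]

lemma mdIter_zero (n : ℕ) (ε : ℝ) (f : ℕ → (Fin n → Bool) → ℝ) :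
    mdIter n ε f 0 = uniformBn n := by
  funext x
  show Real.exp _ / Zf n ε f 0 = _
  rw [Zf_zero]
  simp [uniformBn]

lemma klDiv_mdIter_eq {n : ℕ} (ε : ℝ) (f : ℕ → (Fin n → Bool) → ℝ)
    {ν : (Fin n → Bool) → ℝ} (hν : IsProbDist ν) (s : ℕ) :
    klDiv ν (mdIter n ε f s) = (∑ x, ν x * Real.log (ν x)) +
      (ε / 4) * (∑ x, ν x * ∑ i ∈ Finset.range s, f i x) + Real.log (Zf n ε f s) := by
  have hZ := Zf_pos n ε f s
  have key : ∀ x, ν x * Real.log (ν x / mdIter n ε f s x) =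
      ν x * Real.log (ν x) + (ε / 4) * (ν x * ∑ i ∈ Finset.range s, f i x) +
        ν x * Real.log (Zf n ε f s) := by
    intro x
    rcases eq_or_lt_of_le (hν.1 x) with h | h
    · rw [← h]; simp
    · have hmd : mdIter n ε f s x =
        Real.exp (-(ε / 4) * ∑ i ∈ Finset.range s, f i x) / Zf n ε f s := rfl
      rw [hmd, Real.log_div h.ne' (div_pos (Real.exp_pos _) hZ).ne',
        Real.log_div (Real.exp_pos _).ne' hZ.ne', Real.log_exp]
      ring
  rw [klDiv]
  rw [Finset.sum_congr rfl (fun x _ => key x), Finset.sum_add_distrib,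
    Finset.sum_add_distrib, ← Finset.mul_sum, ← Finset.sum_mul, hν.2, one_mul]


set_option maxHeartbeats 1000000 in
/-- Against a high-entropy (random-circuit) distribution `ν` with
`D(ν‖U) ≤ ln(3/δ)`, the verification game with mirror descent updates lasts at most
`16 ε⁻² ln(3/δ)` rounds, ends with an iterate close to `ν` in total variation, and
the final iterate can be rejection-sampled in at most `exp(4 ln(3/δ)/ε)` expected
trials. -/
theorem verification_game_random_circuits (n : ℕ) (hn : 1 ≤ n)
    (δ : ℝ) (hδ : δ ∈ Set.Ioo (0 : ℝ) 1)
    (ε : ℝ) (hε : ε ∈ Set.Ioc (0 : ℝ) 1)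
    (ν : (Fin n → Bool) → ℝ) (hν : IsProbDist ν)
    (hent : klDiv ν (uniformBn n) ≤ Real.log (3 / δ))
    (t : ℕ) (f : ℕ → (Fin n → Bool) → ℝ)
    (hf : ∀ i < t, ∀ x, f i x ∈ Set.Icc (0 : ℝ) 1)
    (hsep : ∀ i < t, expect (mdIter n ε f i) (f i) - expect ν (f i) ≥ ε) :
    (t : ℝ) ≤ 16 / ε ^ 2 * Real.log (3 / δ) ∧
      tvDist ν (mdIter n ε f t) ≤
        Real.sqrt (2 * (Real.log (3 / δ) - t * ε ^ 2 / 16)) ∧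
      (2 : ℝ) ^ n / (∑ x, Real.exp (-(ε / 4) * ∑ i ∈ Finset.range t, f i x)) ≤
        Real.exp (4 * Real.log (3 / δ) / ε) := by
  obtain ⟨hδ0, hδ1⟩ := hδ
  obtain ⟨hε0, hε1⟩ := hε
  set L := Real.log (3 / δ) with hLdef
  have hL0 : 0 ≤ L := Real.log_nonneg (by rw [le_div_iff₀ hδ0]; linarith)
  have hent0 : klDiv ν (mdIter n ε f 0) ≤ L := by rw [mdIter_zero]; exact hent
  -- the one-step decrease of the KL divergence
  have hstep : ∀ i, i < t → klDiv ν (mdIter n ε f (i + 1)) + 7 * ε ^ 2 / 32 ≤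
      klDiv ν (mdIter n ε f i) := by
    intro i hi
    have hZi := Zf_pos n ε f i
    have hZi1 := Zf_pos n ε f (i + 1)
    set E := expect (mdIter n ε f i) (f i) with hEdef
    have hE0 : 0 ≤ E := Finset.sum_nonneg fun x _ =>
      mul_nonneg (mdIter_pos n ε f i x).le (hf i hi x).1
    have hE1 : E ≤ 1 := by
      calc E ≤ ∑ x, mdIter n ε f i x * 1 :=
            Finset.sum_le_sum fun x _ =>
              mul_le_mul_of_nonneg_left (hf i hi x).2 (mdIter_pos n ε f i x).le
        _ = 1 := by simp only [mul_one]; exact (mdIter_prob n ε f i).2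
    have hEf : ∑ x, Real.exp (-(ε / 4) * ∑ j ∈ Finset.range i, f j x) * f i x =
        Zf n ε f i * E := by
      have hE' : E = (∑ x, Real.exp (-(ε / 4) * ∑ j ∈ Finset.range i, f j x) * f i x) /
          Zf n ε f i := by
        rw [hEdef]
        show (∑ x, mdIter n ε f i x * f i x) = _
        rw [eq_div_iff hZi.ne', Finset.sum_mul]
        refine Finset.sum_congr rfl fun x _ => ?_
        rw [show mdIter n ε f i x =
          Real.exp (-(ε / 4) * ∑ j ∈ Finset.range i, f j x) / Zf n ε f i from rfl]
        field_simp
      rw [hE', mul_comm, div_mul_cancel₀ _ hZi.ne']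
    have hZrec : Zf n ε f (i + 1) ≤ Zf n ε f i * (1 - ε / 4 * E + ε ^ 2 / 32) := by
      have hexp : ∀ x : Fin n → Bool,
          Real.exp (-(ε / 4) * ∑ j ∈ Finset.range (i + 1), f j x) ≤
          Real.exp (-(ε / 4) * ∑ j ∈ Finset.range i, f j x) *
            (1 - ε / 4 * f i x + ε ^ 2 / 32) := by
        intro x
        have hsplit : -(ε / 4) * ∑ j ∈ Finset.range (i + 1), f j x =
            -(ε / 4) * (∑ j ∈ Finset.range i, f j x) + -(ε / 4 * f i x) := by
          rw [Finset.sum_range_succ]; ring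
        rw [hsplit, Real.exp_add]
        have ha : 0 ≤ ε / 4 * f i x := mul_nonneg (by linarith) (hf i hi x).1
        have h1 := expNegLe ha
        have hq : 0 ≤ ε ^ 2 * ((1 - f i x) * (1 + f i x)) :=
          mul_nonneg (sq_nonneg ε) (mul_nonneg (by linarith [(hf i hi x).2])
            (by linarith [(hf i hi x).1]))
        have h2 : 1 - ε / 4 * f i x + (ε / 4 * f i x) ^ 2 / 2 ≤
            1 - ε / 4 * f i x + ε ^ 2 / 32 := by nlinarith [hq]
        exact mul_le_mul_of_nonneg_left (h1.trans h2) (Real.exp_pos _).le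
      calc Zf n ε f (i + 1)
          ≤ ∑ x, Real.exp (-(ε / 4) * ∑ j ∈ Finset.range i, f j x) *
              (1 - ε / 4 * f i x + ε ^ 2 / 32) := Finset.sum_le_sum fun x _ => hexp x
        _ = Zf n ε f i * (1 - ε / 4 * E + ε ^ 2 / 32) := by
            have expand : ∀ x : Fin n → Bool,
                Real.exp (-(ε / 4) * ∑ j ∈ Finset.range i, f j x) *
                  (1 - ε / 4 * f i x + ε ^ 2 / 32) =
                (1 + ε ^ 2 / 32) * Real.exp (-(ε / 4) * ∑ j ∈ Finset.range i, f j x) -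
                  ε / 4 * (Real.exp (-(ε / 4) * ∑ j ∈ Finset.range i, f j x) * f i x) :=
              fun x => by ring
            rw [Finset.sum_congr rfl fun x _ => expand x, Finset.sum_sub_distrib,
              ← Finset.mul_sum, ← Finset.mul_sum, hEf]
            show (1 + ε ^ 2 / 32) * Zf n ε f i - ε / 4 * (Zf n ε f i * E) = _
            ring
    have hpos2 : 0 < 1 - ε / 4 * E + ε ^ 2 / 32 := by nlinarith [hE1, hE0, hε0, hε1]
    have hlogZ : Real.log (Zf n ε f (i + 1)) ≤
        Real.log (Zf n ε f i) + (-(ε / 4 * E) + ε ^ 2 / 32) := by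
      have h1 : Real.log (Zf n ε f (i + 1)) ≤
          Real.log (Zf n ε f i * (1 - ε / 4 * E + ε ^ 2 / 32)) :=
        Real.log_le_log hZi1 hZrec
      have h2 : Real.log (Zf n ε f i * (1 - ε / 4 * E + ε ^ 2 / 32)) =
          Real.log (Zf n ε f i) + Real.log (1 - ε / 4 * E + ε ^ 2 / 32) :=
        Real.log_mul hZi.ne' hpos2.ne'
      have h3 : Real.log (1 - ε / 4 * E + ε ^ 2 / 32) ≤ -(ε / 4 * E) + ε ^ 2 / 32 := by
        have := Real.log_le_sub_one_of_pos hpos2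
        linarith
      linarith
    have hB1 := klDiv_mdIter_eq ε f hν (i + 1)
    have hB0 := klDiv_mdIter_eq ε f hν i
    have hSsucc : (∑ x, ν x * ∑ j ∈ Finset.range (i + 1), f j x) =
        (∑ x, ν x * ∑ j ∈ Finset.range i, f j x) + expect ν (f i) := by
      show _ = _ + ∑ x, ν x * f i x
      rw [← Finset.sum_add_distrib]
      exact Finset.sum_congr rfl fun x _ => by rw [Finset.sum_range_succ]; ring
    have hνf : expect ν (f i) ≤ E - ε := by
      have h := hsep i hi
      rw [hEdef]
      linarith
    rw [hB1, hB0, hSsucc]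
    have hmul : ε / 4 * expect ν (f i) ≤ ε / 4 * (E - ε) :=
      mul_le_mul_of_nonneg_left hνf (by linarith)
    have hdistrib : ε / 4 * ((∑ x, ν x * ∑ j ∈ Finset.range i, f j x) + expect ν (f i)) =
        ε / 4 * (∑ x, ν x * ∑ j ∈ Finset.range i, f j x) + ε / 4 * expect ν (f i) := by
      ring
    rw [hdistrib]
    nlinarith [hlogZ, hmul]
  -- iterate the one-step decrease
  have hmain : ∀ s, s ≤ t → klDiv ν (mdIter n ε f s) + (s : ℝ) * (7 * ε ^ 2 / 32) ≤
      klDiv ν (mdIter n ε f 0) := by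
    intro s
    induction s with
    | zero => intro _; simp
    | succ k ih =>
        intro hk
        have h1 := ih (Nat.le_of_succ_le hk)
        have h2 := hstep k (Nat.lt_of_succ_le hk)
        push_cast
        push_cast at h1
        linarith
  have hDt0 : 0 ≤ klDiv ν (mdIter n ε f t) :=
    klDivNonneg hν (mdIter_prob n ε f t) (mdIter_pos n ε f t)
  have hTL : klDiv ν (mdIter n ε f t) + (t : ℝ) * (7 * ε ^ 2 / 32) ≤ L :=
    le_trans (hmain t le_rfl) hent0
  have hεsq : (0 : ℝ) < ε ^ 2 := pow_pos hε0 2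
  refine ⟨?_, ?_, ?_⟩
  · rw [div_mul_eq_mul_div, le_div_iff₀ hεsq]
    nlinarith [hTL, hDt0, hL0]
  · have htν : (0 : ℝ) ≤ (t : ℝ) * ε ^ 2 := mul_nonneg (Nat.cast_nonneg t) (sq_nonneg ε)
    have hX : klDiv ν (mdIter n ε f t) ≤ L - (t : ℝ) * ε ^ 2 / 16 := by
      nlinarith [hTL, htν]
    have hX0 : (0 : ℝ) ≤ L - (t : ℝ) * ε ^ 2 / 16 := le_trans hDt0 hX
    apply Real.le_sqrt_of_sq_le
    have htv := tvSqLeKl hν (mdIter_prob n ε f t) (mdIter_pos n ε f t)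
    nlinarith [htv, hX, hX0]
  · have hZt := Zf_pos n ε f t
    have hBt := klDiv_mdIter_eq ε f hν t
    have hB0' := klDiv_mdIter_eq ε f hν 0
    have hS0 : (∑ x, ν x * ∑ i ∈ Finset.range 0, f i x) = 0 := by simp
    rw [hS0, mul_zero, add_zero, Zf_zero] at hB0'
    have hESt0 : (∑ x, ν x * ∑ i ∈ Finset.range t, f i x) ≤ (t : ℝ) := by
      calc (∑ x, ν x * ∑ i ∈ Finset.range t, f i x) ≤ ∑ x, ν x * (t : ℝ) := by
            refine Finset.sum_le_sum fun x _ => ?_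
            refine mul_le_mul_of_nonneg_left ?_ (hν.1 x)
            calc (∑ i ∈ Finset.range t, f i x) ≤ ∑ i ∈ Finset.range t, (1 : ℝ) :=
                Finset.sum_le_sum fun i hi => (hf i (Finset.mem_range.1 hi) x).2
              _ = (t : ℝ) := by simp
        _ = (t : ℝ) := by rw [← Finset.sum_mul, hν.2, one_mul]
    have hlogZt : Real.log ((2 : ℝ) ^ n / Zf n ε f t) ≤ L + ε / 4 * (t : ℝ) := by
      rw [Real.log_div (by positivity) hZt.ne']
      have h1 : Real.log ((2 : ℝ) ^ n) - Real.log (Zf n ε f t) =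
          klDiv ν (mdIter n ε f 0) - klDiv ν (mdIter n ε f t) +
            ε / 4 * (∑ x, ν x * ∑ i ∈ Finset.range t, f i x) := by
        linear_combination hBt - hB0'
      have h2 : ε / 4 * (∑ x, ν x * ∑ i ∈ Finset.range t, f i x) ≤ ε / 4 * (t : ℝ) :=
        mul_le_mul_of_nonneg_left hESt0 (by linarith)
      linarith [h1, hent0, hDt0, h2]
    have hfinal : Real.log ((2 : ℝ) ^ n / Zf n ε f t) * ε ≤ 4 * L := by
      have hmul := mul_le_mul_of_nonneg_right hlogZt hε0.le
      have hp1 : 0 ≤ L * (1 - ε) := mul_nonneg hL0 (by linarith)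
      nlinarith [hmul, hTL, hDt0, hp1]
    show (2 : ℝ) ^ n / Zf n ε f t ≤ Real.exp (4 * L / ε)
    have hpos3 : 0 < (2 : ℝ) ^ n / Zf n ε f t := by positivity
    rw [← Real.exp_log hpos3]
    apply Real.exp_le_exp.2
    rw [le_div_iff₀ hε0]
    exact hfinal
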